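/- Let φ(x) = a_n x^n + ... + a_0 ∈ C[x] have n distinct roots. If the remainder of φ'(x)h(x) modulo φ(x) (the unique polynomial of degree < n agreeing with φ'·h at all roots) has zero coefficient of x^{n-1}, then Σ_{i=1}^n h(x_i) = 0. -/

import Mathlib

open Polynomial

theorem euler_trace_vanishing (n : ℕ) (φ : Polynomial ℂ)
    (hdeg : φ.degree = (n : WithBot ℕ)) (x : Fin n → ℂ) (hx : Function.Injective x)
    (hroots : ∀ i, φ.eval (x i) = 0)
    (p q : Polynomial ℂ) (hq : ∀ i, q.eval (x i) ≠ 0)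
    (r : Polynomial ℂ) (hrdeg : r.degree < (n : WithBot ℕ))
    (hr : ∀ i, r.eval (x i) =
      (Polynomial.derivative φ).eval (x i) * (p.eval (x i) / q.eval (x i)))
    (htop : r.coeff (n - 1) = 0) :
    ∑ i, p.eval (x i) / q.eval (x i) = 0 := by
  rcases Nat.eq_zero_or_pos n with hn | hn
  · subst hn; simp
  set h : Fin n → ℂ := fun i => p.eval (x i) / q.eval (x i) with hh
  have hφ0 : φ ≠ 0 := fun H => by simp [H] at hdeg
  set a : ℂ := φ.leadingCoeff with ha
  have ha0 : a ≠ 0 := leadingCoeff_ne_zero.mpr hφ0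
  have hnat : φ.natDegree = n := natDegree_eq_of_degree_eq_some hdeg
  -- the roots of φ are exactly the x i
  have hM : φ.roots = Multiset.map x Finset.univ.val := by
    have hle : Multiset.map x Finset.univ.val ≤ φ.roots := by
      refine (Multiset.le_iff_subset (Finset.univ.nodup.map hx)).mpr ?_
      intro c hc
      obtain ⟨i, _, rfl⟩ := Multiset.mem_map.mp hc
      simpa [mem_roots hφ0, IsRoot] using hroots i
    have hcard : φ.roots.card = n := by
      rw [splits_iff_card_roots.mp (IsAlgClosed.splits φ), hnat]
    symm
    refine Multiset.eq_of_le_of_card_le hle ?_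
    simp [hcard]
  -- φ as product of linear factors
  have hprod : φ = C a * ∏ i, (X - C (x i)) := by
    conv_lhs => rw [Splits.eq_prod_roots (IsAlgClosed.splits φ)]
    rw [hM, ← ha, Multiset.map_map]
    rfl
  -- derivative values
  have hder : ∀ i, (Polynomial.derivative φ).eval (x i) =
      a * ∏ j ∈ Finset.univ.erase i, (x i - x j) := by
    intro i
    rw [hprod, derivative_mul, derivative_C, zero_mul, zero_add, eval_mul, eval_C]
    congr 1
    have hmem : x i ∈ Multiset.map x Finset.univ.val :=
      Multiset.mem_map.mpr ⟨i, Finset.mem_univ_val i, rfl⟩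
    rw [show (∏ i : Fin n, (X - C (x i)))
        = (Multiset.map (fun a => X - C a) (Multiset.map x Finset.univ.val)).prod by
      rw [Multiset.map_map, Finset.prod_eq_multiset_prod]; rfl]
    rw [eval_multiset_prod_X_sub_C_derivative hmem, ← Multiset.map_erase _ hx,
      Multiset.map_map, Finset.prod_eq_multiset_prod, Finset.erase_val]
    rfl
  have hinj : Set.InjOn x (Finset.univ : Finset (Fin n)) := hx.injOn
  have hcardu : (Finset.univ : Finset (Fin n)).card = n := by simp
  -- Lagrange interpolation
  have hrint : r = Lagrange.interpolate Finset.univ x fun i => r.eval (x i) := by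
    refine Lagrange.eq_interpolate hinj ?_
    rwa [hcardu]
  -- coefficient computation
  have hd : ∀ i : Fin n, (∏ j ∈ Finset.univ.erase i, (x i - x j)) ≠ 0 := by
    intro i
    refine Finset.prod_ne_zero_iff.mpr fun j hj => sub_ne_zero_of_ne ?_
    exact fun H => (Finset.mem_erase.mp hj).1 (hx H.symm)
  have hbcoeff : ∀ i : Fin n,
      (Lagrange.basis Finset.univ x i).coeff (n - 1) =
      (∏ j ∈ Finset.univ.erase i, (x i - x j))⁻¹ := by
    intro i
    have hb0 : Lagrange.basis Finset.univ x i ≠ 0 :=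
      Lagrange.basis_ne_zero hinj (Finset.mem_univ i)
    have hndb : (Lagrange.basis Finset.univ x i).natDegree = n - 1 := by
      rw [Lagrange.natDegree_basis hinj (Finset.mem_univ i), hcardu]
    rw [← hndb, ← leadingCoeff]
    rw [Lagrange.basis, leadingCoeff_prod]
    rw [← Finset.prod_inv_distrib]
    refine Finset.prod_congr rfl fun j hj => ?_
    have hne : x i ≠ x j := fun H => (Finset.mem_erase.mp hj).1 (hx H.symm)
    rw [Lagrange.basisDivisor, leadingCoeff_mul, leadingCoeff_C, leadingCoeff_X_sub_C, mul_one]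
  have hcoeff : r.coeff (n - 1) = a * ∑ i, h i := by
    rw [hrint, Lagrange.interpolate_apply, finset_sum_coeff, Finset.mul_sum]
    refine Finset.sum_congr rfl fun i _ => ?_
    rw [coeff_C_mul, hbcoeff i, hr i, hder i]
    simp only [hh]
    have hdi := mul_inv_cancel₀ (hd i)
    linear_combination a * (eval (x i) p / eval (x i) q) * hdi
  have hz : a * ∑ i, h i = 0 := by rw [← hcoeff]; exact htop
  exact (mul_eq_zero.mp hz).resolve_left ha0
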